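/- Let λ > 1, r > 0, and η', η, η̄', η̄ ∈ (1/λ, 1] with η̄' ≥ η', η̄ ≥ η, and η̄' ≤ η. With P = 1 − ηλ + rλ(η' − η), C = 1 − ηλ + r·η'λ²(η̄' − η), Q = 1 + r, E = r·η'λ + 1, F = η(η̄ − η)λ², G = η'λ − 1, H = η'λ(η̄'λ − 1), the function h(τ) = ((P + τC)² + (Q + τE)²·F) / (G + τH)² is strictly decreasing on [0, ∞). -/

import Mathlib

set_option maxHeartbeats 2000000 in
lemma rbb_aux_K (l r a b c d : ℝ) (hl : 0 ≤ l) (hr : 0 ≤ r) (ha : 0 ≤ a)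
    (hb : 0 ≤ b) (hc : 0 ≤ c) (hd : 0 ≤ d) :
    (0:ℝ) ≤ a^4 + l*a^2*d + l*a^2*b + l*a^3*d + 2*l*a^3*c + 3*l*a^3*b + l*r*a^2*d + l*r*a^2*b + 2*l*r*a^3*d + l*r*a^3*c + l*r*a^3*b + l*r*a^4*d + l*r*a^4*c + l^2*b*d + 2*l^2*a*b*d + 2*l^2*a*b*c + 2*l^2*a*b^2 + l^2*a^2*c*d + l^2*a^2*c^2 + 2*l^2*a^2*b*d + 4*l^2*a^2*b*c + 3*l^2*a^2*b^2 + 2*l^2*r*b*d + 5*l^2*r*a*b*d + 3*l^2*r*a*b*c + 2*l^2*r*a*b^2 + l^2*r*a^2*c*d + l^2*r*a^2*c^2 + 5*l^2*r*a^2*b*d + 5*l^2*r*a^2*b*c + 2*l^2*r*a^2*b^2 + l^2*r*a^3*c*d + l^2*r*a^3*c^2 + 2*l^2*r*a^3*b*d + 2*l^2*r*a^3*b*c + l^2*r^2*b*d + 3*l^2*r^2*a*b*d + l^2*r^2*a*b*c + 3*l^2*r^2*a^2*b*d + 2*l^2*r^2*a^2*b*c + l^2*r^2*a^3*b*d + l^2*r^2*a^3*b*c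 + l^3*b*c*d + l^3*b*c^2 + l^3*b^2*d + 2*l^3*b^2*c + l^3*b^3 + l^3*a*b*c*d + l^3*a*b*c^2 + l^3*a*b^2*d + 2*l^3*a*b^2*c + l^3*a*b^3 + 2*l^3*r*b*c*d + 2*l^3*r*b*c^2 + 2*l^3*r*b^2*d + 3*l^3*r*b^2*c + l^3*r*b^3 + 3*l^3*r*a*b*c*d + 3*l^3*r*a*b*c^2 + 3*l^3*r*a*b^2*d + 4*l^3*r*a*b^2*c + l^3*r*a*b^3 + l^3*r*a^2*b*c*d + l^3*r*a^2*b*c^2 + l^3*r*a^2*b^2*d + l^3*r*a^2*b^2*c + l^3*r^2*b*c*d + l^3*r^2*b*c^2 + l^3*r^2*b^2*d + l^3*r^2*b^2*c + 2*l^3*r^2*a*b*c*d + 2*l^3*r^2*a*b*c^2 + 2*l^3*r^2*a*b^2*d + 2*l^3*r^2*a*b^2*c + l^3*r^2*a^2*b*c*d + l^3*r^2*a^2*b*c^2 + l^3*r^2*a^2*b^2*d + l^3*r^2*a^2*b^2*c := by positivity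

set_option maxHeartbeats 2000000 in
lemma rbb_aux_I (l r a b c d : ℝ) (hl : 0 ≤ l) (hr : 0 ≤ r) (ha : 0 ≤ a)
    (hb : 0 ≤ b) (hc : 0 ≤ c) (hd : 0 ≤ d) :
    (0:ℝ) ≤ l*a^2*d + l*a^2*b + l*a^3*d + 2*l*a^3*c + 3*l*a^3*b + l*r*a^2*d + l*r*a^2*b + l*r*a^3*d + l*r*a^3*c + 2*l*r*a^3*b + l^2*b*d + 2*l^2*a*b*d + 2*l^2*a*b*c + 2*l^2*a*b^2 + l^2*a^2*c*d + l^2*a^2*c^2 + 2*l^2*a^2*b*d + 4*l^2*a^2*b*c + 3*l^2*a^2*b^2 + 2*l^2*r*b*d + 4*l^2*r*a*b*d + 3*l^2*r*a*b*c + 3*l^2*r*a*b^2 + l^2*r*a^2*c*d + l^2*r*a^2*c^2 + 3*l^2*r*a^2*b*d + 5*l^2*r*a^2*b*c + 4*l^2*r*a^2*b^2 + l^2*r^2*b*d + 2*l^2*r^2*a*b*d + l^2*r^2*a*b*c + l^2*r^2*a*b^2 + l^2*r^2*a^2*b*d + l^2*r^2*a^2*b*c + l^2*r^2*a^2*b^2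 + l^3*b*c*d + l^3*b*c^2 + l^3*b^2*d + 2*l^3*b^2*c + l^3*b^3 + l^3*a*b*c*d + l^3*a*b*c^2 + l^3*a*b^2*d + 2*l^3*a*b^2*c + l^3*a*b^3 + 2*l^3*r*b*c*d + 2*l^3*r*b*c^2 + 2*l^3*r*b^2*d + 4*l^3*r*b^2*c + 2*l^3*r*b^3 + 2*l^3*r*a*b*c*d + 2*l^3*r*a*b*c^2 + 2*l^3*r*a*b^2*d + 4*l^3*r*a*b^2*c + 2*l^3*r*a*b^3 + l^3*r^2*b*c*d + l^3*r^2*b*c^2 + l^3*r^2*b^2*d + 2*l^3*r^2*b^2*c + l^3*r^2*b^3 + l^3*r^2*a*b*c*d + l^3*r^2*a*b*c^2 + l^3*r^2*a*b^2*d + 2*l^3*r^2*a*b^2*c + l^3*r^2*a*b^3 := by positivity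

set_option maxHeartbeats 8000000 in
theorem stmt_17 (lam r η' η ηb' ηb : ℝ) (hlam : 1 < lam) (hr : 0 < r)
    (hη' : η' ∈ Set.Ioc (1 / lam) 1) (hη : η ∈ Set.Ioc (1 / lam) 1)
    (hηb' : ηb' ∈ Set.Ioc (1 / lam) 1) (hηb : ηb ∈ Set.Ioc (1 / lam) 1)
    (h1 : η' ≤ ηb') (h2 : η ≤ ηb) (h3 : ηb' ≤ η) :
    StrictAntiOn
      (fun τ : ℝ =>
        (((1 - η * lam + r * lam * (η' - η)) + τ * (1 - η * lam + r * η' * lam ^ 2 * (ηb' - η))) ^ 2 +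
            ((1 + r) + τ * (r * η' * lam + 1)) ^ 2 * (η * (ηb - η) * lam ^ 2)) /
          ((η' * lam - 1) + τ * (η' * lam * (ηb' * lam - 1))) ^ 2)
      (Set.Ici (0 : ℝ)) := by
  have hlam0 : (0:ℝ) < lam := by linarith
  have hx : 1 / lam < η' := hη'.1
  have hu : 1 / lam < ηb' := hηb'.1
  have hxl : 1 < η' * lam := by rw [div_lt_iff₀ hlam0] at hx; linarith
  have hul : 1 < ηb' * lam := by rw [div_lt_iff₀ hlam0] at hu; linarith
  set P : ℝ := 1 - η * lam + r * lam * (η' - η) with hP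
  set C : ℝ := 1 - η * lam + r * η' * lam ^ 2 * (ηb' - η) with hC
  set Q : ℝ := 1 + r with hQ
  set E : ℝ := r * η' * lam + 1 with hE
  set F : ℝ := η * (ηb - η) * lam ^ 2 with hF
  set G : ℝ := η' * lam - 1 with hG
  set H : ℝ := η' * lam * (ηb' * lam - 1) with hH
  have hGpos : 0 < G := by rw [hG]; linarith
  have hHpos : 0 < H := by rw [hH]; nlinarith
  have hKey1 := rbb_aux_K lam r (η' * lam - 1) (ηb' - η') (η - ηb') (ηb - η)
    hlam0.le hr.le (by linarith) (by linarith) (by linarith) (by linarith)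
  have hKey2 := rbb_aux_I lam r (η' * lam - 1) (ηb' - η') (η - ηb') (ηb - η)
    hlam0.le hr.le (by linarith) (by linarith) (by linarith) (by linarith)
  have hK : 0 ≤ (P * C + Q * E * F) * H - (C ^ 2 + E ^ 2 * F) * G := by
    refine le_of_le_of_eq hKey1 ?_
    rw [hP, hC, hQ, hE, hF, hG, hH]; ring
  have hI : 0 < (P ^ 2 + Q ^ 2 * F) * H - (P * C + Q * E * F) * G := by
    have h4 : 0 < (η' * lam - 1) ^ 4 := by positivity
    have h5 : (η' * lam - 1) ^ 4 ≤ (P ^ 2 + Q ^ 2 * F) * H - (P * C + Q * E * F) * G := by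
      have := le_of_le_of_eq hKey2
        (show _ = (P ^ 2 + Q ^ 2 * F) * H - (P * C + Q * E * F) * G - (η' * lam - 1) ^ 4 by
          rw [hP, hC, hQ, hE, hF, hG, hH]; ring)
      linarith
    linarith
  intro s hs t ht hst
  simp only [Set.mem_Ici] at hs ht
  have hDs : 0 < G + s * H := by nlinarith
  have hDt : 0 < G + t * H := by nlinarith
  simp only
  rw [div_lt_div_iff₀ (by positivity) (by positivity)]
  have key : ((P + s * C) ^ 2 + (Q + s * E) ^ 2 * F) * ((G + t * H) ^ 2)
      - ((P + t * C) ^ 2 + (Q + t * E) ^ 2 * F) * ((G + s * H) ^ 2)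
      = (t - s) * ((2 * G + (s + t) * H) * ((P ^ 2 + Q ^ 2 * F) * H - (P * C + Q * E * F) * G)
        + ((s + t) * G + 2 * (s * t) * H) * ((P * C + Q * E * F) * H - (C ^ 2 + E ^ 2 * F) * G)) := by
    ring
  have hfin := mul_pos (sub_pos.mpr hst) (add_pos_of_pos_of_nonneg
    (mul_pos (show (0:ℝ) < 2 * G + (s + t) * H by nlinarith) hI)
    (mul_nonneg (show (0:ℝ) ≤ (s + t) * G + 2 * (s * t) * H by positivity) hK))
  linarith [key, hfin]
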